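/- arXiv:0802.0474 — 3 statements merged into one kernel-verified Lean document; each statement's English description precedes it below -/
import Mathlib

section
/- For every z > 0 and ν ≥ -1/2, the modified Bessel function satisfies Soni's inequality I_{ν+1}(z) < I_ν(z). -/
noncomputable def besselI (ν z : ℝ) : ℝ :=
  ∑' k : ℕ, (z / 2) ^ (ν + 2 * (k : ℝ)) / (Real.Gamma (k + 1) * Real.Gamma (k + ν + 1))

namespace Soni

open Real

/-- coefficient of `x^(2k)` in `A` -/
noncomputable def cA (ν : ℝ) (k : ℕ) : ℝ :=
  1 / (Real.Gamma (k + 1) * Real.Gamma (k + ν + 1))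

/-- coefficient of `x^(2k+1)` in `B` (and of `x^(2k)` in `C`) -/
noncomputable def cB (ν : ℝ) (k : ℕ) : ℝ :=
  1 / (Real.Gamma (k + 1) * Real.Gamma (k + ν + 2))

noncomputable def A (ν x : ℝ) : ℝ := ∑' k : ℕ, cA ν k * x ^ (2 * k)
noncomputable def B (ν x : ℝ) : ℝ := ∑' k : ℕ, cB ν k * x ^ (2 * k + 1)
noncomputable def C (ν x : ℝ) : ℝ := ∑' k : ℕ, cB ν k * x ^ (2 * k)

section basic

variable {ν : ℝ} (hν : -1/2 ≤ ν)

lemma gamma1_pos (k : ℕ) : 0 < Real.Gamma ((k : ℝ) + 1) :=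
  Real.Gamma_pos_of_pos (by positivity)

include hν

lemma arg_pos (k : ℕ) : 0 < (k : ℝ) + ν + 1 := by
  have : (0:ℝ) ≤ k := Nat.cast_nonneg k
  linarith

lemma gamma2_pos (k : ℕ) : 0 < Real.Gamma ((k : ℝ) + ν + 1) :=
  Real.Gamma_pos_of_pos (arg_pos hν k)

lemma cA_pos (k : ℕ) : 0 < cA ν k := by
  unfold cA
  have := gamma1_pos k
  have := gamma2_pos hν k
  positivity

lemma cB_pos (k : ℕ) : 0 < cB ν k := by
  unfold cB
  have h : 0 < Real.Gamma ((k : ℝ) + ν + 2) := by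
    apply Real.Gamma_pos_of_pos
    have : (0:ℝ) ≤ k := Nat.cast_nonneg k
    linarith
  have := gamma1_pos k
  positivity

/-- `Γ(k+ν+1) ≥ k! Γ(ν+1) / 2^k` for `ν ≥ -1/2`. -/
lemma gamma_lb (k : ℕ) :
    (k.factorial : ℝ) * Real.Gamma (ν + 1) ≤ 2 ^ k * Real.Gamma ((k : ℝ) + ν + 1) := by
  induction k with
  | zero => simp
  | succ n ih =>
    have hΓpos := gamma2_pos hν n
    have hrec : Real.Gamma (((n+1 : ℕ) : ℝ) + ν + 1) = ((n:ℝ) + ν + 1) * Real.Gamma ((n:ℝ) + ν + 1) := by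
      have : (((n+1 : ℕ) : ℝ) + ν + 1) = ((n:ℝ) + ν + 1) + 1 := by push_cast; ring
      rw [this, Real.Gamma_add_one (ne_of_gt (arg_pos hν n))]
    have hfac : ((n+1).factorial : ℝ) = (n + 1) * n.factorial := by
      push_cast [Nat.factorial_succ]; ring
    rw [hrec, hfac]
    have h1 : ((n:ℝ) + 1) ≤ 2 * ((n:ℝ) + ν + 1) := by linarith [Nat.cast_nonneg (α := ℝ) n]
    have h2 : ((n:ℝ) + 1) * ((n.factorial : ℝ) * Real.Gamma (ν + 1))
        ≤ ((n:ℝ) + 1) * (2 ^ n * Real.Gamma ((n:ℝ) + ν + 1)) := by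
      apply mul_le_mul_of_nonneg_left ih (by positivity)
    calc ((n:ℝ) + 1) * (n.factorial : ℝ) * Real.Gamma (ν + 1)
        = ((n:ℝ) + 1) * ((n.factorial : ℝ) * Real.Gamma (ν + 1)) := by ring
      _ ≤ ((n:ℝ) + 1) * (2 ^ n * Real.Gamma ((n:ℝ) + ν + 1)) := h2
      _ ≤ (2 * ((n:ℝ) + ν + 1)) * (2 ^ n * Real.Gamma ((n:ℝ) + ν + 1)) := by
          apply mul_le_mul_of_nonneg_right h1 (by positivity)
      _ = 2 ^ (n+1) * (((n:ℝ) + ν + 1) * Real.Gamma ((n:ℝ) + ν + 1)) := by ring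

lemma cA_le (k : ℕ) : cA ν k ≤ 2 ^ k / (k.factorial * Real.Gamma (ν + 1)) := by
  have hg1 : Real.Gamma ((k:ℝ) + 1) = k.factorial := by
    exact_mod_cast Real.Gamma_nat_eq_factorial k
  have hΓν : 0 < Real.Gamma (ν + 1) := Real.Gamma_pos_of_pos (by linarith)
  have hΓ2 := gamma2_pos hν k
  have hfac : (0:ℝ) < k.factorial := by exact_mod_cast Nat.factorial_pos k
  have hlb : (k.factorial : ℝ) * Real.Gamma (ν + 1) / 2 ^ k ≤ Real.Gamma ((k:ℝ) + ν + 1) := by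
    rw [div_le_iff₀ (by positivity)]
    calc (k.factorial : ℝ) * Real.Gamma (ν + 1) ≤ 2 ^ k * Real.Gamma ((k : ℝ) + ν + 1) :=
          gamma_lb hν k
      _ = Real.Gamma ((k:ℝ) + ν + 1) * 2 ^ k := by ring
  have hfac1 : (1:ℝ) ≤ k.factorial := by exact_mod_cast Nat.one_le_iff_ne_zero.mpr k.factorial_pos.ne'
  unfold cA
  rw [hg1]
  rw [div_le_div_iff₀ (by positivity) (by positivity)]
  calc (1:ℝ) * ((k.factorial : ℝ) * Real.Gamma (ν+1))
      = (k.factorial : ℝ) * Real.Gamma (ν+1) := by ring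
    _ ≤ 2 ^ k * Real.Gamma ((k : ℝ) + ν + 1) := gamma_lb hν k
    _ ≤ 2 ^ k * ((k.factorial : ℝ) * Real.Gamma ((k:ℝ) + ν + 1)) := by
        apply mul_le_mul_of_nonneg_left _ (by positivity)
        nlinarith
    _ = 2 ^ k * ((k.factorial : ℝ) * Real.Gamma ((k:ℝ) + ν + 1)) := rfl

omit hν in
lemma cB_eq : cB ν = cA (ν + 1) := by
  funext k
  unfold cA cB
  ring_nf

lemma cB_le (k : ℕ) : cB ν k ≤ 2 ^ k / (k.factorial * Real.Gamma (ν + 2)) := by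
  have h : -1/2 ≤ ν + 1 := by linarith
  have := cA_le h k
  rw [cB_eq]
  convert this using 3
  ring

end basic

/-- master summability lemma -/
lemma summable_master {c d : ℕ → ℝ} {G t : ℝ} (hG : 0 < G) (s : ℝ) (hs : 0 ≤ s)
    (hc : ∀ k, |c k| ≤ 2 ^ k / (k.factorial * G))
    (hd : ∀ k, |d k| ≤ t * ((2 * k + 2) * s ^ k)) :
    Summable fun k => c k * d k := by
  have ht : 0 ≤ t := by
    have := hd 0
    have h0 : (0:ℝ) ≤ |d 0| := abs_nonneg _
    simp at this
    nlinarith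
  apply Summable.of_norm_bounded (g := fun k => (4 * t / G) * ((4 * s) ^ k / k.factorial))
  · exact ((Real.summable_pow_div_factorial (4 * s)).mul_left _)
  · intro k
    have hfac : (0:ℝ) < k.factorial := by exact_mod_cast Nat.factorial_pos k
    have hk2 : (2 * (k:ℝ) + 2) ≤ 4 * 2 ^ k := by
      have : (k:ℝ) ≤ 2 ^ k := by exact_mod_cast (Nat.lt_two_pow_self).le
      have h2 : (1:ℝ) ≤ 2 ^ k := one_le_pow₀ (by norm_num)
      linarith
    have h1 : ‖c k * d k‖ = |c k| * |d k| := abs_mul _ _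
    rw [h1]
    calc |c k| * |d k| ≤ (2 ^ k / (k.factorial * G)) * (t * ((2 * k + 2) * s ^ k)) := by
          apply mul_le_mul (hc k) (hd k) (abs_nonneg _)
          positivity
      _ ≤ (2 ^ k / (k.factorial * G)) * (t * ((4 * 2 ^ k) * s ^ k)) := by
          apply mul_le_mul_of_nonneg_left _ (by positivity)
          apply mul_le_mul_of_nonneg_left _ ht
          apply mul_le_mul_of_nonneg_right hk2 (by positivity)
      _ = (4 * t / G) * ((4 * s) ^ k / k.factorial) := by
          have h4 : (2:ℝ) ^ k * 2 ^ k = 4 ^ k := by rw [← mul_pow]; norm_num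
          rw [mul_pow (4:ℝ) s k, ← h4]
          field_simp


section deriv

variable {ν : ℝ} (hν : -1/2 ≤ ν)

include hν

lemma summable_A (r : ℝ) : Summable fun k => cA ν k * r ^ (2 * k) := by
  apply summable_master (G := Real.Gamma (ν + 1))
    (Real.Gamma_pos_of_pos (by linarith)) (r ^ 2) (sq_nonneg r)
    (fun k => by rw [abs_of_pos (cA_pos hν k)]; exact cA_le hν k)
  intro k
  rw [pow_mul, abs_pow, abs_of_nonneg (sq_nonneg r), one_mul]
  have h1 : (0:ℝ) ≤ (r^2)^k := pow_nonneg (sq_nonneg r) k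
  nlinarith [Nat.cast_nonneg (α := ℝ) k]

lemma summable_C (r : ℝ) : Summable fun k => cB ν k * r ^ (2 * k) := by
  rw [cB_eq]
  exact summable_A (by linarith) r

lemma summable_B (r : ℝ) : Summable fun k => cB ν k * r ^ (2 * k + 1) := by
  apply summable_master (G := Real.Gamma (ν + 2))
    (Real.Gamma_pos_of_pos (by linarith)) (r ^ 2) (sq_nonneg r) (t := |r|)
    (fun k => by rw [abs_of_pos (cB_pos hν k)]; exact cB_le hν k)
  intro k
  rw [pow_succ, abs_mul, pow_mul, abs_pow, abs_of_nonneg (sq_nonneg r)]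
  have h1 : (0:ℝ) ≤ (r^2)^k := pow_nonneg (sq_nonneg r) k
  nlinarith [mul_nonneg (abs_nonneg r) h1,
    mul_nonneg (mul_nonneg (abs_nonneg r) h1) (Nat.cast_nonneg (α := ℝ) k)]

omit hν in
lemma summable_u {c : ℕ → ℝ} {G : ℝ} (hG : 0 < G)
    (hc : ∀ k, |c k| ≤ 2 ^ k / (k.factorial * G)) (R : ℝ) (hR : 0 ≤ R) :
    Summable fun k => c k * ((2 * k + 2) * (R ^ 2) ^ k) := by
  apply summable_master hG (R ^ 2) (sq_nonneg R) hc (t := 1)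
  intro k
  rw [one_mul, abs_of_nonneg (by positivity : (0:ℝ) ≤ (2 * (k:ℝ) + 2) * (R ^ 2) ^ k)]

lemma hasDerivAt_A (x : ℝ) : HasDerivAt (A ν) (2 * B ν x) x := by
  set R := |x| + 1 with hRdef
  have hR1 : (1:ℝ) ≤ R := by rw [hRdef]; linarith [abs_nonneg x]
  have hR0 : (0:ℝ) ≤ R := by linarith
  have hball : x ∈ Metric.ball (0:ℝ) R := by
    simp [Metric.mem_ball, Real.dist_eq, hRdef]
  have hball0 : (0:ℝ) ∈ Metric.ball (0:ℝ) R := by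
    simp [Metric.mem_ball]; linarith
  have hcabs : ∀ k, |cA ν k| ≤ 2 ^ k / (k.factorial * Real.Gamma (ν + 1)) :=
    fun k => by rw [abs_of_pos (cA_pos hν k)]; exact cA_le hν k
  have hu : Summable fun k : ℕ => cA ν k * ((2 * k + 2) * (R ^ 2) ^ k) :=
    summable_u (Real.Gamma_pos_of_pos (by linarith : (0:ℝ) < ν + 1)) hcabs R hR0
  have hbound : ∀ (k : ℕ) (y : ℝ), y ∈ Metric.ball (0:ℝ) R →
      ‖cA ν k * (((2 * k : ℕ) : ℝ) * y ^ (2 * k - 1))‖ ≤ cA ν k * ((2 * k + 2) * (R ^ 2) ^ k) := by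
    intro k y hy
    have hyR : |y| ≤ R := by
      simp [Metric.mem_ball, Real.dist_eq] at hy; linarith
    rw [norm_mul, norm_mul, Real.norm_eq_abs, Real.norm_eq_abs, Real.norm_eq_abs,
      abs_of_pos (cA_pos hν k)]
    apply mul_le_mul_of_nonneg_left _ (cA_pos hν k).le
    have h1 : |y| ^ (2 * k - 1) ≤ R ^ (2 * k - 1) :=
      pow_le_pow_left₀ (abs_nonneg y) hyR _
    have h2 : R ^ (2 * k - 1) ≤ R ^ (2 * k) :=
      pow_le_pow_right₀ hR1 (Nat.sub_le _ _)
    have h3 : R ^ (2 * k) = (R ^ 2) ^ k := by rw [← pow_mul]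
    have h4 : |((2 * k : ℕ) : ℝ)| = 2 * k := by
      rw [abs_of_nonneg (Nat.cast_nonneg _)]; push_cast; ring
    rw [abs_pow, h4]
    have h5 : (0:ℝ) ≤ (R^2)^k := pow_nonneg (sq_nonneg R) k
    calc 2 * (k:ℝ) * |y| ^ (2 * k - 1) ≤ 2 * (k:ℝ) * (R ^ 2) ^ k := by
          apply mul_le_mul_of_nonneg_left _ (by positivity)
          calc |y| ^ (2*k-1) ≤ R ^ (2*k-1) := h1
            _ ≤ R ^ (2*k) := h2
            _ = (R^2)^k := h3
      _ ≤ (2 * (k:ℝ) + 2) * (R ^ 2) ^ k := by nlinarith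
  have key : HasDerivAt (fun y => ∑' k : ℕ, cA ν k * y ^ (2 * k))
      (∑' k : ℕ, cA ν k * (((2 * k : ℕ) : ℝ) * x ^ (2 * k - 1))) x := by
    apply hasDerivAt_tsum_of_isPreconnected hu Metric.isOpen_ball
      (convex_ball (0:ℝ) R).isPreconnected
      (fun k y _ => (hasDerivAt_pow (2 * k) y).const_mul (cA ν k))
      hbound hball0 (summable_A hν 0) hball
  have hsum' : Summable fun k : ℕ => cA ν k * (((2 * k : ℕ) : ℝ) * x ^ (2 * k - 1)) := by
    apply hu.of_norm_bounded
    intro k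
    exact hbound k x hball
  have heq : (∑' k : ℕ, cA ν k * (((2 * k : ℕ) : ℝ) * x ^ (2 * k - 1))) = 2 * B ν x := by
    rw [hsum'.tsum_eq_zero_add]
    simp only [Nat.mul_zero, Nat.cast_zero, zero_mul, mul_zero, zero_add]
    unfold B
    rw [← tsum_mul_left]
    apply tsum_congr
    intro k
    have hsub : 2 * (k + 1) - 1 = 2 * k + 1 := by omega
    rw [hsub]
    unfold cA cB
    have e1 : Real.Gamma (((k+1 : ℕ) : ℝ) + 1) = ((k:ℝ) + 1) * Real.Gamma ((k:ℝ) + 1) := by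
      rw [show (((k+1 : ℕ) : ℝ) + 1) = ((k:ℝ) + 1) + 1 by push_cast; ring,
        Real.Gamma_add_one (by positivity)]
    have e2 : Real.Gamma (((k+1 : ℕ) : ℝ) + ν + 1) = Real.Gamma ((k:ℝ) + ν + 2) := by
      congr 1; push_cast; ring
    rw [e1, e2]
    have hΓ1 : Real.Gamma ((k:ℝ) + 1) ≠ 0 := (gamma1_pos k).ne'
    have hΓ2 : Real.Gamma ((k:ℝ) + ν + 2) ≠ 0 := by
      apply ne_of_gt; apply Real.Gamma_pos_of_pos
      have : (0:ℝ) ≤ k := Nat.cast_nonneg k; linarith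
    have hk1 : ((k:ℝ) + 1) ≠ 0 := by positivity
    have hcast : ((2 * (k+1) : ℕ) : ℝ) = 2 * ((k:ℝ) + 1) := by push_cast; ring
    rw [hcast]
    field_simp
  rw [← heq]
  exact key

lemma hasDerivAt_B (x : ℝ) :
    HasDerivAt (B ν) (2 * A ν x - (2 * ν + 1) * C ν x) x := by
  set R := |x| + 1 with hRdef
  have hR1 : (1:ℝ) ≤ R := by rw [hRdef]; linarith [abs_nonneg x]
  have hR0 : (0:ℝ) ≤ R := by linarith
  have hball : x ∈ Metric.ball (0:ℝ) R := by
    simp [Metric.mem_ball, Real.dist_eq, hRdef]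
  have hball0 : (0:ℝ) ∈ Metric.ball (0:ℝ) R := by
    simp [Metric.mem_ball]; linarith
  have hcabs : ∀ k, |cB ν k| ≤ 2 ^ k / (k.factorial * Real.Gamma (ν + 2)) :=
    fun k => by rw [abs_of_pos (cB_pos hν k)]; exact cB_le hν k
  have hu0 : Summable fun k : ℕ => cB ν k * ((2 * k + 2) * (R ^ 2) ^ k) :=
    summable_u (Real.Gamma_pos_of_pos (by linarith : (0:ℝ) < ν + 2)) hcabs R hR0
  have hu : Summable fun k : ℕ => R * (cB ν k * ((2 * k + 2) * (R ^ 2) ^ k)) :=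
    hu0.mul_left R
  have hbound : ∀ (k : ℕ) (y : ℝ), y ∈ Metric.ball (0:ℝ) R →
      ‖cB ν k * (((2 * k + 1 : ℕ) : ℝ) * y ^ (2 * k + 1 - 1))‖
        ≤ R * (cB ν k * ((2 * k + 2) * (R ^ 2) ^ k)) := by
    intro k y hy
    have hyR : |y| ≤ R := by
      simp [Metric.mem_ball, Real.dist_eq] at hy; linarith
    have hsub : 2 * k + 1 - 1 = 2 * k := by omega
    rw [hsub, norm_mul, norm_mul, Real.norm_eq_abs, Real.norm_eq_abs, Real.norm_eq_abs,
      abs_of_pos (cB_pos hν k)]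
    have h1 : |y| ^ (2 * k) ≤ (R ^ 2) ^ k := by
      rw [← pow_mul]
      exact pow_le_pow_left₀ (abs_nonneg y) hyR _
    have h4 : |((2 * k + 1 : ℕ) : ℝ)| = 2 * (k:ℝ) + 1 := by
      rw [abs_of_nonneg (Nat.cast_nonneg _)]; push_cast; ring
    rw [abs_pow, h4]
    have h5 : (0:ℝ) ≤ (R^2)^k := pow_nonneg (sq_nonneg R) k
    have h6 : (0:ℝ) ≤ |y| ^ (2*k) := pow_nonneg (abs_nonneg y) _
    have hc := (cB_pos hν k).le
    calc cB ν k * ((2 * (k:ℝ) + 1) * |y| ^ (2 * k))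
        ≤ cB ν k * ((2 * (k:ℝ) + 2) * (R ^ 2) ^ k) := by
          apply mul_le_mul_of_nonneg_left _ hc
          apply mul_le_mul (by linarith) h1 h6 (by positivity)
      _ ≤ R * (cB ν k * ((2 * (k:ℝ) + 2) * (R ^ 2) ^ k)) := by
          nlinarith [mul_nonneg hc (mul_nonneg (by positivity : (0:ℝ) ≤ 2*(k:ℝ)+2) h5)]
  have key : HasDerivAt (fun y => ∑' k : ℕ, cB ν k * y ^ (2 * k + 1))
      (∑' k : ℕ, cB ν k * (((2 * k + 1 : ℕ) : ℝ) * x ^ (2 * k + 1 - 1))) x := by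
    apply hasDerivAt_tsum_of_isPreconnected hu Metric.isOpen_ball
      (convex_ball (0:ℝ) R).isPreconnected
      (fun k y _ => (hasDerivAt_pow (2 * k + 1) y).const_mul (cB ν k))
      hbound hball0 (summable_B hν 0) hball
  have heq : (∑' k : ℕ, cB ν k * (((2 * k + 1 : ℕ) : ℝ) * x ^ (2 * k + 1 - 1)))
      = 2 * A ν x - (2 * ν + 1) * C ν x := by
    have hterm : ∀ k : ℕ, cB ν k * (((2 * k + 1 : ℕ) : ℝ) * x ^ (2 * k + 1 - 1))
        = 2 * (cA ν k * x ^ (2 * k)) - (2 * ν + 1) * (cB ν k * x ^ (2 * k)) := by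
      intro k
      have hsub : 2 * k + 1 - 1 = 2 * k := by omega
      rw [hsub]
      have hcast : ((2 * k + 1 : ℕ) : ℝ) = 2 * (k:ℝ) + 1 := by push_cast; ring
      rw [hcast]
      unfold cA cB
      have hpos : (0:ℝ) < (k:ℝ) + ν + 1 := arg_pos hν k
      have e2 : Real.Gamma ((k:ℝ) + ν + 2) = ((k:ℝ) + ν + 1) * Real.Gamma ((k:ℝ) + ν + 1) := by
        rw [show ((k:ℝ) + ν + 2) = ((k:ℝ) + ν + 1) + 1 by ring,
          Real.Gamma_add_one hpos.ne']
      rw [e2]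
      have hΓ1 : Real.Gamma ((k:ℝ) + 1) ≠ 0 := (gamma1_pos k).ne'
      have hΓ2 : Real.Gamma ((k:ℝ) + ν + 1) ≠ 0 := (gamma2_pos hν k).ne'
      field_simp
      ring
    rw [tsum_congr hterm]
    rw [Summable.tsum_sub ((summable_A hν x).mul_left 2) ((summable_C hν x).mul_left (2*ν+1))]
    rw [tsum_mul_left, tsum_mul_left]
    rfl
  rw [← heq]
  exact key

lemma C_nonneg (x : ℝ) : 0 ≤ C ν x := by
  apply tsum_nonneg
  intro k
  have h1 : (0:ℝ) ≤ x ^ (2*k) := by rw [pow_mul]; exact pow_nonneg (sq_nonneg x) k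
  exact mul_nonneg (cB_pos hν k).le h1

omit hν in
lemma A_zero : A ν 0 = cA ν 0 := by
  unfold A
  rw [tsum_eq_single 0]
  · norm_num
  · intro k hk
    rw [zero_pow (by omega), mul_zero]

omit hν in
lemma B_zero : B ν 0 = 0 := by
  unfold B
  simp

lemma B_lt_A (x : ℝ) (hx : 0 < x) : B ν x < A ν x := by
  set g : ℝ → ℝ := fun y => Real.exp (2 * y) * (A ν y - B ν y) with hg_def
  have hg : ∀ y, HasDerivAt g (Real.exp (2 * y) * ((2 * ν + 1) * C ν y)) y := by
    intro y
    have h2y : HasDerivAt (fun y : ℝ => 2 * y) 2 y := by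
      simpa using (hasDerivAt_id y).const_mul 2
    have h1 : HasDerivAt (fun y : ℝ => Real.exp (2 * y)) (Real.exp (2 * y) * 2) y := h2y.exp
    have h2 := (hasDerivAt_A hν y).sub (hasDerivAt_B hν y)
    have h3 := h1.mul h2
    convert h3 using 1 <;> first | rfl | (simp only [Pi.sub_apply]; ring)
  have hmono : Monotone g := by
    apply monotone_of_deriv_nonneg (fun y => (hg y).differentiableAt)
    intro y
    rw [(hg y).deriv]
    have hC := C_nonneg hν y
    have h1 : (0:ℝ) ≤ 2 * ν + 1 := by linarith
    positivity
  have hg0 : g 0 = cA ν 0 := by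
    simp [hg_def, A_zero, B_zero]
  have hgx : 0 < g x := by
    have := hmono hx.le
    rw [hg0] at this
    exact lt_of_lt_of_le (cA_pos hν 0) this
  rw [hg_def] at hgx
  simp only at hgx
  nlinarith [Real.exp_pos (2 * x)]

end deriv

end Soni

theorem soni_inequality (ν z : ℝ) (hν : -1/2 ≤ ν) (hz : 0 < z) :
    besselI (ν + 1) z < besselI ν z := by
  have hx : 0 < z / 2 := by linarith
  have hAeq : besselI ν z = (z/2) ^ ν * Soni.A ν (z/2) := by
    unfold besselI Soni.A Soni.cA
    rw [← tsum_mul_left]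
    apply tsum_congr
    intro k
    have h1 : (z/2) ^ (ν + 2 * (k:ℝ)) = (z/2) ^ ν * (z/2) ^ (2*k : ℕ) := by
      rw [Real.rpow_add hx, ← Real.rpow_natCast (z/2) (2*k)]
      norm_num
    rw [h1]
    ring
  have hBeq : besselI (ν+1) z = (z/2) ^ ν * Soni.B ν (z/2) := by
    unfold besselI Soni.B Soni.cB
    rw [← tsum_mul_left]
    apply tsum_congr
    intro k
    have h1 : (z/2) ^ (ν + 1 + 2 * (k:ℝ)) = (z/2) ^ ν * (z/2) ^ (2*k+1 : ℕ) := by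
      rw [show ν + 1 + 2 * (k:ℝ) = ν + ((2*k+1 : ℕ) : ℝ) by push_cast; ring,
        Real.rpow_add hx, Real.rpow_natCast]
    have h2 : Real.Gamma ((k:ℝ) + (ν+1) + 1) = Real.Gamma ((k:ℝ) + ν + 2) := by
      congr 1; ring
    rw [h1, h2]
    ring
  rw [hAeq, hBeq]
  exact mul_lt_mul_of_pos_left (Soni.B_lt_A hν (z/2) hx) (Real.rpow_pos_of_pos hx ν)
end

section
/- For ν > -1/2 and z > 0, the modified Bessel function admits the Schläfli–Poisson integral representation I_ν(z) = z^ν ∫_{-1}^{1} e^{-zs} (1-s^2)^{ν-1/2} ds / (√π 2^ν Γ(ν+1/2)). -/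
open MeasureTheory Set Real



lemma rbeta_eq {a b : ℝ} (ha : 0 < a) (hb : 0 < b) :
    ∫ t in (0:ℝ)..1, t ^ (a-1) * (1-t) ^ (b-1) = Gamma a * Gamma b / Gamma (a+b) := by
  have key : Complex.betaIntegral a b
      = ((∫ t in (0:ℝ)..1, t ^ (a-1) * (1-t) ^ (b-1) : ℝ) : ℂ) := by
    rw [Complex.betaIntegral, ← intervalIntegral.integral_ofReal]
    refine intervalIntegral.integral_congr fun x hx => ?_
    rw [uIcc_of_le zero_le_one] at hx
    rw [Complex.ofReal_mul, Complex.ofReal_cpow hx.1,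
      Complex.ofReal_cpow (by linarith [hx.2] : (0:ℝ) ≤ 1 - x)]
    push_cast
    norm_num
  have h := Complex.Gamma_mul_Gamma_eq_betaIntegral (s := (a:ℂ)) (t := (b:ℂ))
    (by simpa using ha) (by simpa using hb)
  rw [key, ← Complex.ofReal_add, Complex.Gamma_ofReal, Complex.Gamma_ofReal,
    Complex.Gamma_ofReal, ← Complex.ofReal_mul, ← Complex.ofReal_mul] at h
  have h' : Gamma a * Gamma b = Gamma (a+b) * ∫ t in (0:ℝ)..1, t ^ (a-1) * (1-t) ^ (b-1) := by
    exact_mod_cast h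
  have hne : Gamma (a+b) ≠ 0 := (Real.Gamma_pos_of_pos (by linarith)).ne'
  field_simp [h']
  linarith [h']

lemma rbeta_int {a b : ℝ} (ha : 0 < a) (hb : 0 < b) :
    IntegrableOn (fun t : ℝ => t ^ (a-1) * (1-t) ^ (b-1)) (Ioo (0:ℝ) 1) := by
  have h := Complex.betaIntegral_convergent (u := (a:ℂ)) (v := (b:ℂ))
    (by simpa using ha) (by simpa using hb)
  rw [intervalIntegrable_iff_integrableOn_Ioc_of_le zero_le_one] at h
  have h2 : IntegrableOn
      (fun t : ℝ => (((t:ℂ) ^ ((a:ℂ)-1) * (1-(t:ℂ)) ^ ((b:ℂ)-1)).re)) (Ioc (0:ℝ) 1) := h.re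
  have h3 : IntegrableOn (fun t : ℝ => t ^ (a-1) * (1-t) ^ (b-1)) (Ioc (0:ℝ) 1) := by
    refine h2.congr ?_
    filter_upwards [ae_restrict_mem measurableSet_Ioc] with x hx
    rw [show ((a:ℂ)-1) = ((a-1 : ℝ):ℂ) by push_cast; ring,
      show ((b:ℂ)-1) = ((b-1 : ℝ):ℂ) by push_cast; ring,
      show (1-(x:ℂ)) = ((1-x : ℝ):ℂ) by push_cast; ring,
      ← Complex.ofReal_cpow hx.1.le, ← Complex.ofReal_cpow (by linarith [hx.2] : (0:ℝ) ≤ 1 - x),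
      ← Complex.ofReal_mul, Complex.ofReal_re]
  exact h3.mono_set Ioo_subset_Ioc_self


lemma sq_image_pos : (fun x : ℝ => x ^ 2) '' Ioo (0:ℝ) 1 = Ioo (0:ℝ) 1 := by
  ext y
  simp only [mem_image, mem_Ioo]
  constructor
  · rintro ⟨x, ⟨h1, h2⟩, rfl⟩
    exact ⟨by positivity, by nlinarith⟩
  · rintro ⟨h1, h2⟩
    exact ⟨Real.sqrt y, ⟨Real.sqrt_pos.2 h1, by
      rw [show (1:ℝ) = Real.sqrt 1 by simp]; exact Real.sqrt_lt_sqrt h1.le h2⟩,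
      Real.sq_sqrt h1.le⟩

lemma sq_image_neg : (fun x : ℝ => x ^ 2) '' Ioo (-1:ℝ) 0 = Ioo (0:ℝ) 1 := by
  ext y
  simp only [mem_image, mem_Ioo]
  constructor
  · rintro ⟨x, ⟨h1, h2⟩, rfl⟩
    exact ⟨by nlinarith, by nlinarith⟩
  · rintro ⟨h1, h2⟩
    refine ⟨-Real.sqrt y, ⟨?_, by simp [Real.sqrt_pos.2 h1]⟩, by rw [neg_pow, Real.sq_sqrt h1.le]; ring⟩
    have : Real.sqrt y < 1 := by
      rw [show (1:ℝ) = Real.sqrt 1 by simp]; exact Real.sqrt_lt_sqrt h1.le h2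
    linarith

lemma sq_injOn_pos : InjOn (fun x : ℝ => x ^ 2) (Ioo (0:ℝ) 1) := by
  intro x hx y hy h
  simp only [mem_Ioo] at hx hy
  have habs : |x| = |y| := by
    rw [← Real.sqrt_sq_eq_abs, ← Real.sqrt_sq_eq_abs]
    simp only at h
    rw [h]
  rcases abs_eq_abs.mp habs with h' | h' <;> [exact h'; linarith [hx.1, hy.1]]

lemma sq_injOn_neg : InjOn (fun x : ℝ => x ^ 2) (Ioo (-1:ℝ) 0) := by
  intro x hx y hy h
  simp only [mem_Ioo] at hx hy
  have habs : |x| = |y| := by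
    rw [← Real.sqrt_sq_eq_abs, ← Real.sqrt_sq_eq_abs]
    simp only at h
    rw [h]
  rcases abs_eq_abs.mp habs with h' | h' <;> [exact h'; linarith [hx.2, hy.2]]

lemma key_pow {x : ℝ} (hx : 0 < x) (m : ℕ) :
    x * ((x ^ 2 : ℝ)) ^ ((m:ℝ) + 1/2 - 1) = x ^ (2*m) := by
  have h1 : ((x ^ 2 : ℝ)) ^ ((m:ℝ) + 1/2 - 1) = x ^ (2*((m:ℝ) + 1/2 - 1)) := by
    rw [← Real.rpow_natCast x 2, ← Real.rpow_mul hx.le]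
    norm_num
  rw [h1]
  calc x * x ^ (2*((m:ℝ) + 1/2 - 1))
      = x ^ (1:ℝ) * x ^ (2*((m:ℝ) + 1/2 - 1)) := by rw [Real.rpow_one]
    _ = x ^ (1 + 2*((m:ℝ) + 1/2 - 1)) := (Real.rpow_add hx _ _).symm
    _ = x ^ (((2*m : ℕ)):ℝ) := by push_cast; ring_nf
    _ = x ^ (2*m) := Real.rpow_natCast x (2*m)

lemma Gamma_nat_add_half (m : ℕ) :
    Real.Gamma ((m:ℝ) + 1/2) = Real.sqrt π * (2*m).factorial / (4 ^ m * m.factorial) := by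
  have h := Real.Gamma_mul_Gamma_add_half ((m:ℝ) + 1/2)
  rw [show (m:ℝ) + 1/2 + 1/2 = (m:ℝ) + 1 by ring, Real.Gamma_nat_eq_factorial,
    show 2*((m:ℝ) + 1/2) = ((2*m : ℕ):ℝ) + 1 by push_cast; ring,
    Real.Gamma_nat_eq_factorial] at h
  have h2 : (2:ℝ) ^ (1 - (((2*m : ℕ):ℝ) + 1)) = ((4:ℝ) ^ m)⁻¹ := by
    rw [show (1 - (((2*m : ℕ):ℝ) + 1)) = -((2*m : ℕ):ℝ) by push_cast; ring,
      Real.rpow_neg (by norm_num), Real.rpow_natCast, pow_mul]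
    norm_num
  rw [h2] at h
  have hm : (m.factorial : ℝ) ≠ 0 := Nat.cast_ne_zero.2 m.factorial_ne_zero
  have h4 : ((4:ℝ) ^ m) ≠ 0 := by positivity
  field_simp at h ⊢
  linarith [h]


lemma sq_subst {ν : ℝ} (hν : -1/2 < ν) (m : ℕ) {σ : Set ℝ}
    (hσm : MeasurableSet σ) (himg : (fun x : ℝ => x ^ 2) '' σ = Ioo (0:ℝ) 1)
    (hinj : Set.InjOn (fun x : ℝ => x ^ 2) σ)
    (heq : ∀ x ∈ σ, |2*x| • ((x^2) ^ ((m:ℝ)+1/2-1) * (1-x^2) ^ (ν+1/2-1))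
        = 2 * (x ^ (2*m) * (1-x^2) ^ (ν - 1/2))) :
    (∫ x in σ, x ^ (2*m) * (1 - x^2) ^ (ν - 1/2))
      = Real.Gamma ((m:ℝ) + 1/2) * Real.Gamma (ν + 1/2) / (2 * Real.Gamma ((m:ℝ) + ν + 1))
    ∧ IntegrableOn (fun x => x ^ (2*m) * (1-x^2) ^ (ν - 1/2)) σ := by
  have ha : 0 < (m:ℝ) + 1/2 := by positivity
  have hb : 0 < ν + 1/2 := by linarith
  have hderiv : ∀ x ∈ σ, HasDerivWithinAt (fun x : ℝ => x ^ 2) (2*x) σ x := fun x _ => by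
    simpa using (hasDerivAt_pow 2 x).hasDerivWithinAt
  have hbeta_int : IntegrableOn (fun t : ℝ => t ^ ((m:ℝ)+1/2-1) * (1-t) ^ (ν+1/2-1))
      (Ioo (0:ℝ) 1) := rbeta_int ha hb
  have hint : IntegrableOn
      (fun x => |2*x| • ((x^2) ^ ((m:ℝ)+1/2-1) * (1-x^2) ^ (ν+1/2-1))) σ := by
    have := (integrableOn_image_iff_integrableOn_abs_deriv_smul hσm hderiv hinj
      (fun t : ℝ => t ^ ((m:ℝ)+1/2-1) * (1-t) ^ (ν+1/2-1))).mp
    rw [himg] at this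
    exact this hbeta_int
  have hint2 : IntegrableOn (fun x => 2 * (x ^ (2*m) * (1-x^2) ^ (ν - 1/2))) σ := by
    refine hint.congr ?_
    filter_upwards [ae_restrict_mem hσm] with x hx
    exact heq x hx
  have hint3 : IntegrableOn (fun x => x ^ (2*m) * (1-x^2) ^ (ν - 1/2)) σ := by
    have := hint2.const_mul (1/2)
    refine this.congr (Filter.Eventually.of_forall fun x => ?_)
    ring
  refine ⟨?_, hint3⟩
  have hval : ∫ x in σ, |2*x| • ((x^2) ^ ((m:ℝ)+1/2-1) * (1-x^2) ^ (ν+1/2-1))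
      = ∫ t in Ioo (0:ℝ) 1, t ^ ((m:ℝ)+1/2-1) * (1-t) ^ (ν+1/2-1) := by
    have := integral_image_eq_integral_abs_deriv_smul hσm hderiv hinj
      (fun t : ℝ => t ^ ((m:ℝ)+1/2-1) * (1-t) ^ (ν+1/2-1))
    rw [himg] at this
    exact this.symm
  have hbeta : ∫ t in Ioo (0:ℝ) 1, t ^ ((m:ℝ)+1/2-1) * (1-t) ^ (ν+1/2-1)
      = Real.Gamma ((m:ℝ)+1/2) * Real.Gamma (ν+1/2) / Real.Gamma ((m:ℝ)+ν+1) := by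
    rw [← MeasureTheory.integral_Ioc_eq_integral_Ioo,
      ← intervalIntegral.integral_of_le zero_le_one, rbeta_eq ha hb,
      show (m:ℝ)+1/2+(ν+1/2) = (m:ℝ)+ν+1 by ring]
  have hcongr : ∫ x in σ, |2*x| • ((x^2) ^ ((m:ℝ)+1/2-1) * (1-x^2) ^ (ν+1/2-1))
      = 2 * ∫ x in σ, x ^ (2*m) * (1-x^2) ^ (ν - 1/2) := by
    rw [MeasureTheory.setIntegral_congr_fun hσm heq, MeasureTheory.integral_const_mul 2]
  have := hcongr.symm.trans (hval.trans hbeta)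
  have h5 : (∫ x in σ, x ^ (2*m) * (1-x^2) ^ (ν - 1/2))
      = (Real.Gamma ((m:ℝ)+1/2) * Real.Gamma (ν+1/2) / Real.Gamma ((m:ℝ)+ν+1)) / 2 := by
    linarith
  rw [h5]; ring


lemma heq_pos {ν : ℝ} (m : ℕ) : ∀ x ∈ Ioo (0:ℝ) 1,
    |2*x| • ((x^2) ^ ((m:ℝ)+1/2-1) * (1-x^2) ^ (ν+1/2-1))
      = 2 * (x ^ (2*m) * (1-x^2) ^ (ν - 1/2)) := by
  intro x hx
  have hx0 : (0:ℝ) < x := hx.1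
  rw [smul_eq_mul, abs_of_pos (by linarith : (0:ℝ) < 2*x), show ν+1/2-1 = ν-1/2 by ring]
  have hk := key_pow hx0 m
  calc 2*x*((x^2) ^ ((m:ℝ)+1/2-1) * (1-x^2) ^ (ν-1/2))
      = 2*(x*(x^2) ^ ((m:ℝ)+1/2-1)) * (1-x^2) ^ (ν-1/2) := by ring
    _ = 2 * (x ^ (2*m) * (1-x^2) ^ (ν-1/2)) := by rw [hk]; ring

lemma heq_neg {ν : ℝ} (m : ℕ) : ∀ x ∈ Ioo (-1:ℝ) 0,
    |2*x| • ((x^2) ^ ((m:ℝ)+1/2-1) * (1-x^2) ^ (ν+1/2-1))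
      = 2 * (x ^ (2*m) * (1-x^2) ^ (ν - 1/2)) := by
  intro x hx
  have hy : (0:ℝ) < -x := by linarith [hx.2]
  have h2 : x^2 = (-x)^2 := by ring
  have hp : x^(2*m) = (-x)^(2*m) := (Even.neg_pow (even_two_mul m) x).symm
  rw [smul_eq_mul, abs_of_neg (by linarith [hx.2] : 2*x < 0),
    show ν+1/2-1 = ν-1/2 by ring, h2, hp]
  have hk := key_pow hy m
  calc -(2*x)*(((-x)^2) ^ ((m:ℝ)+1/2-1) * (1-(-x)^2) ^ (ν-1/2))
      = 2*((-x)*((-x)^2) ^ ((m:ℝ)+1/2-1)) * (1-(-x)^2) ^ (ν-1/2) := by ring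
    _ = 2 * ((-x) ^ (2*m) * (1-(-x)^2) ^ (ν-1/2)) := by rw [hk]; ring

lemma moment_odd (ν : ℝ) (r : ℕ) :
    ∫ x in Ioo (-1:ℝ) 1, x ^ (2*r+1) * (1-x^2) ^ (ν - 1/2) = 0 := by
  have h0 : ∫ x in Ioo (-1:ℝ) 1, x ^ (2*r+1) * (1-x^2) ^ (ν-1/2)
      = ∫ x in (-1:ℝ)..1, x ^ (2*r+1) * (1-x^2) ^ (ν-1/2) := by
    rw [intervalIntegral.integral_of_le (by norm_num : (-1:ℝ) ≤ 1),
      MeasureTheory.integral_Ioc_eq_integral_Ioo]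
  have hneg := intervalIntegral.integral_comp_neg (a := (-1:ℝ)) (b := 1)
    (fun x => x ^ (2*r+1) * (1-x^2) ^ (ν-1/2))
  have he : ∀ x : ℝ, (-x) ^ (2*r+1) * (1-(-x)^2) ^ (ν-1/2)
      = -(x ^ (2*r+1) * (1-x^2) ^ (ν-1/2)) := by
    intro x
    rw [Odd.neg_pow ⟨r, by ring⟩, neg_sq]
    ring
  simp only [he, neg_neg] at hneg
  rw [intervalIntegral.integral_neg] at hneg
  rw [h0]
  linarith


lemma moment_eq {ν : ℝ} (hν : -1/2 < ν) (m : ℕ) :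
    (∫ x in Ioo (-1:ℝ) 1, x ^ (2*m) * (1-x^2) ^ (ν - 1/2))
      = Real.Gamma ((m:ℝ)+1/2) * Real.Gamma (ν+1/2) / Real.Gamma ((m:ℝ)+ν+1)
    ∧ IntegrableOn (fun x => x ^ (2*m) * (1-x^2) ^ (ν - 1/2)) (Ioo (-1:ℝ) 1) := by
  obtain ⟨hv1, hi1⟩ := sq_subst hν m measurableSet_Ioo sq_image_neg sq_injOn_neg (heq_neg m)
  obtain ⟨hv2, hi2⟩ := sq_subst hν m measurableSet_Ioo sq_image_pos sq_injOn_pos (heq_pos m)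
  have hIoc : IntegrableOn (fun x => x ^ (2*m) * (1-x^2) ^ (ν - 1/2)) (Ioc (-1:ℝ) 0) :=
    hi1.congr_set_ae Ioo_ae_eq_Ioc.symm
  have hunion : Ioc (-1:ℝ) 0 ∪ Ioo (0:ℝ) 1 = Ioo (-1:ℝ) 1 := by
    ext x
    simp only [mem_union, mem_Ioc, mem_Ioo]
    constructor
    · rintro (⟨h1, h2⟩ | ⟨h1, h2⟩) <;> exact ⟨by linarith, by linarith⟩
    · rintro ⟨h1, h2⟩
      rcases le_or_gt x 0 with h | h
      exacts [Or.inl ⟨h1, h⟩, Or.inr ⟨h, h2⟩]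
  have hdisj : Disjoint (Ioc (-1:ℝ) 0) (Ioo (0:ℝ) 1) := by
    rw [Set.disjoint_left]
    rintro x ⟨_, h2⟩ ⟨h3, _⟩
    linarith
  constructor
  · rw [← hunion, MeasureTheory.setIntegral_union hdisj measurableSet_Ioo hIoc hi2,
      MeasureTheory.integral_Ioc_eq_integral_Ioo, hv1, hv2]
    ring
  · rw [← hunion]
    exact hIoc.union hi2


theorem schlafli_poisson (ν z : ℝ) (hν : -1/2 < ν) (hz : 0 < z) :
    besselI ν z = z ^ ν *
      (∫ s in (-1 : ℝ)..1, Real.exp (-z * s) * (1 - s ^ 2) ^ (ν - 1/2)) /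
        (Real.sqrt Real.pi * 2 ^ ν * Real.Gamma (ν + 1/2)) := by
  have hb : 0 < ν + 1/2 := by linarith
  have hWmeas : Measurable (fun s : ℝ => (1 - s^2) ^ (ν - 1/2)) := by fun_prop
  have hW_int : IntegrableOn (fun s : ℝ => (1 - s^2) ^ (ν - 1/2)) (Ioo (-1:ℝ) 1) := by
    have := (moment_eq hν 0).2
    simpa using this
  have hA : ∀ k : ℕ, IntegrableOn (fun s : ℝ => s^k * (1 - s^2) ^ (ν - 1/2)) (Ioo (-1:ℝ) 1) := by
    intro k
    refine MeasureTheory.Integrable.mono hW_int ((measurable_id.pow_const k).mul hWmeas).aestronglyMeasurable ?_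
    filter_upwards [ae_restrict_mem measurableSet_Ioo] with s hs
    have h1 : |s| ≤ 1 := abs_le.mpr ⟨hs.1.le, hs.2.le⟩
    calc ‖s^k * (1 - s^2) ^ (ν - 1/2)‖ = |s|^k * ‖(1 - s^2) ^ (ν - 1/2)‖ := by
          rw [norm_mul, Real.norm_eq_abs, abs_pow]
      _ ≤ 1 * ‖(1 - s^2) ^ (ν - 1/2)‖ :=
          mul_le_mul_of_nonneg_right (pow_le_one₀ (abs_nonneg _) h1) (norm_nonneg _)
      _ = ‖(1 - s^2) ^ (ν - 1/2)‖ := one_mul _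
  have hswap : ∫ s in Ioo (-1:ℝ) 1, Real.exp (-z*s) * (1 - s^2) ^ (ν - 1/2)
      = ∑' k : ℕ, ((-z)^k / (k.factorial:ℝ)) * ∫ s in Ioo (-1:ℝ) 1, s^k * (1 - s^2) ^ (ν - 1/2) := by
    have hFint : ∀ k : ℕ, Integrable
        (fun s : ℝ => ((-z)^k / (k.factorial:ℝ)) * (s^k * (1 - s^2) ^ (ν - 1/2)))
        (volume.restrict (Ioo (-1:ℝ) 1)) := fun k => (hA k).const_mul _
    have hFsum : Summable fun k : ℕ =>
        ∫ s, ‖((-z)^k / (k.factorial:ℝ)) * (s^k * (1 - s^2) ^ (ν - 1/2))‖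
          ∂(volume.restrict (Ioo (-1:ℝ) 1)) := by
      refine Summable.of_nonneg_of_le (fun k => integral_nonneg fun s => norm_nonneg _)
        (fun k => ?_) ((Real.summable_pow_div_factorial z).mul_right
          (∫ s in Ioo (-1:ℝ) 1, (1 - s^2) ^ (ν - 1/2)))
      have habs : |(-z)^k / (k.factorial:ℝ)| = z^k / k.factorial := by
        rw [abs_div, abs_pow, abs_neg, abs_of_pos hz, abs_of_pos (by positivity)]
      calc ∫ s, ‖((-z)^k / (k.factorial:ℝ)) * (s^k * (1 - s^2) ^ (ν - 1/2))‖
            ∂(volume.restrict (Ioo (-1:ℝ) 1))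
          = ∫ s, |(-z)^k / (k.factorial:ℝ)| * ‖s^k * (1 - s^2) ^ (ν - 1/2)‖
            ∂(volume.restrict (Ioo (-1:ℝ) 1)) := by
            congr 1; funext s; rw [norm_mul, Real.norm_eq_abs]
        _ = |(-z)^k / (k.factorial:ℝ)| * ∫ s, ‖s^k * (1 - s^2) ^ (ν - 1/2)‖
            ∂(volume.restrict (Ioo (-1:ℝ) 1)) := MeasureTheory.integral_const_mul _ _
        _ ≤ (z^k / k.factorial) * ∫ s in Ioo (-1:ℝ) 1, (1 - s^2) ^ (ν - 1/2) := by
            rw [habs]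
            refine mul_le_mul_of_nonneg_left ?_ (by positivity)
            refine integral_mono_ae (hA k).norm hW_int ?_
            filter_upwards [ae_restrict_mem measurableSet_Ioo] with s hs
            have h1 : |s| ≤ 1 := abs_le.mpr ⟨hs.1.le, hs.2.le⟩
            have hWpos : 0 ≤ (1 - s^2) ^ (ν - 1/2) :=
              Real.rpow_nonneg (by nlinarith [hs.1, hs.2]) _
            calc ‖s^k * (1 - s^2) ^ (ν - 1/2)‖ = |s|^k * (1 - s^2) ^ (ν - 1/2) := by
                  rw [norm_mul, Real.norm_eq_abs, Real.norm_eq_abs, abs_pow,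
                    abs_of_nonneg hWpos]
              _ ≤ 1 * (1 - s^2) ^ (ν - 1/2) :=
                  mul_le_mul_of_nonneg_right (pow_le_one₀ (abs_nonneg _) h1) hWpos
              _ = (1 - s^2) ^ (ν - 1/2) := one_mul _
    have key := MeasureTheory.integral_tsum_of_summable_integral_norm hFint hFsum
    have hpt : ∀ s : ℝ, (∑' k : ℕ, ((-z)^k / (k.factorial:ℝ)) * (s^k * (1 - s^2) ^ (ν - 1/2)))
        = Real.exp (-z*s) * (1 - s^2) ^ (ν - 1/2) := by
      intro s
      have h1 : ∀ k : ℕ, ((-z)^k / (k.factorial:ℝ)) * (s^k * (1 - s^2) ^ (ν - 1/2))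
          = ((-z*s)^k / (k.factorial:ℝ)) * (1 - s^2) ^ (ν - 1/2) := by
        intro k; rw [mul_pow]; ring
      rw [tsum_congr h1, tsum_mul_right]
      congr 1
      simp only [Real.exp_eq_exp_ℝ, NormedSpace.exp_eq_tsum_div]
    calc ∫ s in Ioo (-1:ℝ) 1, Real.exp (-z*s) * (1 - s^2) ^ (ν - 1/2)
        = ∫ s in Ioo (-1:ℝ) 1,
            (∑' k : ℕ, ((-z)^k / (k.factorial:ℝ)) * (s^k * (1 - s^2) ^ (ν - 1/2))) :=
          integral_congr_ae (Filter.Eventually.of_forall fun s => (hpt s).symm)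
      _ = ∑' k : ℕ, ∫ s in Ioo (-1:ℝ) 1,
            ((-z)^k / (k.factorial:ℝ)) * (s^k * (1 - s^2) ^ (ν - 1/2)) := key.symm
      _ = ∑' k : ℕ, ((-z)^k / (k.factorial:ℝ)) * ∫ s in Ioo (-1:ℝ) 1,
            s^k * (1 - s^2) ^ (ν - 1/2) :=
          tsum_congr fun k => MeasureTheory.integral_const_mul _ _
  -- reindex over even naturals
  have hre : (∑' k : ℕ, ((-z)^k / (k.factorial:ℝ)) * ∫ s in Ioo (-1:ℝ) 1,
        s^k * (1 - s^2) ^ (ν - 1/2))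
      = ∑' m : ℕ, ((-z)^(2*m) / ((2*m).factorial:ℝ)) * ∫ s in Ioo (-1:ℝ) 1,
        s^(2*m) * (1 - s^2) ^ (ν - 1/2) := by
    refine (Function.Injective.tsum_eq (g := fun m : ℕ => 2*m)
      (mul_right_injective₀ two_ne_zero) ?_).symm
    refine Function.support_subset_iff'.mpr fun k hk => ?_
    have hodd : Odd k := by
      rcases Nat.even_or_odd k with ⟨r, hr⟩ | h
      · exact absurd ⟨r, by show 2*r = k; omega⟩ hk
      · exact h
    obtain ⟨r, hr⟩ := hodd
    rw [hr, moment_odd ν r, mul_zero]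
  have hterm : ∀ m : ℕ, ((-z)^(2*m) / ((2*m).factorial:ℝ)) * ∫ s in Ioo (-1:ℝ) 1,
        s^(2*m) * (1 - s^2) ^ (ν - 1/2)
      = Real.sqrt π * Real.Gamma (ν+1/2) *
        (z^(2*m) / (4^m * m.factorial * Real.Gamma ((m:ℝ)+ν+1))) := by
    intro m
    have hΓ : Real.Gamma ((m:ℝ)+ν+1) ≠ 0 := by
      refine (Real.Gamma_pos_of_pos ?_).ne'
      have := Nat.cast_nonneg (α := ℝ) m
      linarith
    have h2m : (((2*m).factorial):ℝ) ≠ 0 := Nat.cast_ne_zero.2 (Nat.factorial_ne_zero _)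
    have hmf : ((m.factorial):ℝ) ≠ 0 := Nat.cast_ne_zero.2 (Nat.factorial_ne_zero _)
    have h4 : ((4:ℝ)^m) ≠ 0 := by positivity
    rw [(moment_eq hν m).1, _root_.Gamma_nat_add_half m, Even.neg_pow (even_two_mul m)]
    field_simp
  have hterm2 : ∀ m : ℕ, (z/2) ^ (ν + 2*(m:ℝ)) / (Real.Gamma ((m:ℝ)+1) * Real.Gamma ((m:ℝ)+ν+1))
      = (z/2)^ν * (z^(2*m) / (4^m * m.factorial * Real.Gamma ((m:ℝ)+ν+1))) := by
    intro m
    have hz2 : (0:ℝ) < z/2 := by linarith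
    have h2 : (z/2) ^ (ν + 2*(m:ℝ)) = (z/2)^ν * (z^(2*m) / 4^m) := by
      rw [Real.rpow_add hz2]
      congr 1
      rw [show (2*(m:ℝ)) = ((2*m : ℕ):ℝ) by push_cast; ring, Real.rpow_natCast,
        div_pow, pow_mul, pow_mul]
      norm_num
    have hΓ : Real.Gamma ((m:ℝ)+ν+1) ≠ 0 := by
      refine (Real.Gamma_pos_of_pos ?_).ne'
      have := Nat.cast_nonneg (α := ℝ) m
      linarith
    have hmf : ((m.factorial):ℝ) ≠ 0 := Nat.cast_ne_zero.2 (Nat.factorial_ne_zero _)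
    have h4 : ((4:ℝ)^m) ≠ 0 := by positivity
    rw [h2, Real.Gamma_nat_eq_factorial]
    field_simp
  have hLHS : besselI ν z
      = (z/2)^ν * ∑' m : ℕ, z^(2*m) / (4^m * m.factorial * Real.Gamma ((m:ℝ)+ν+1)) := by
    simp only [besselI]
    rw [tsum_congr hterm2, tsum_mul_left]
  have hRHS : ∫ s in (-1:ℝ)..1, Real.exp (-z * s) * (1 - s^2) ^ (ν - 1/2)
      = Real.sqrt π * Real.Gamma (ν+1/2) *
        ∑' m : ℕ, z^(2*m) / (4^m * m.factorial * Real.Gamma ((m:ℝ)+ν+1)) := by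
    rw [intervalIntegral.integral_of_le (by norm_num : (-1:ℝ) ≤ 1),
      MeasureTheory.integral_Ioc_eq_integral_Ioo, hswap, hre, tsum_congr hterm, tsum_mul_left]
  rw [hLHS, hRHS]
  have hsπ : Real.sqrt π ≠ 0 := (Real.sqrt_pos.2 Real.pi_pos).ne'
  have h2ν : (2:ℝ)^ν ≠ 0 := (Real.rpow_pos_of_pos two_pos ν).ne'
  have hΓν : Real.Gamma (ν+1/2) ≠ 0 := (Real.Gamma_pos_of_pos hb).ne'
  rw [Real.div_rpow hz.le (by norm_num : (0:ℝ) ≤ 2),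
    eq_div_iff (mul_ne_zero (mul_ne_zero hsπ h2ν) hΓν), div_mul_eq_mul_div,
    div_mul_eq_mul_div, div_eq_iff h2ν]
  ring
end

section
/- Let b ≥ 0, c > 0. Then for all x, y > 0, s ∈ [-1,1], and ζ ∈ (0,1): x^b · exp(-c q₊(x,y,s)/ζ - c ζ q₋(x,y,s)) ≤ C ζ^{-b/2}, where q_±(x,y,s) = x² + y² ± 2xys and C depends only on b, c. -/
lemma pow_div_factorial_le_exp (x : ℝ) (hx : 0 ≤ x) (n : ℕ) :
    x ^ n / n.factorial ≤ Real.exp x := by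
  calc x ^ n / n.factorial
      ≤ ∑ i ∈ Finset.range (n + 1), x ^ i / i.factorial := by
        refine Finset.single_le_sum (f := fun i => x ^ i / (i.factorial : ℝ)) ?_
          (Finset.self_mem_range_succ n)
        intro i _
        positivity
    _ ≤ Real.exp x := Real.sum_le_exp_of_nonneg hx _

lemma aux_bound (b c : ℝ) (hb : 0 ≤ b) (hc : 0 < c) :
    ∃ C : ℝ, 0 < C ∧ ∀ u : ℝ, 0 ≤ u →
      u ^ b * Real.exp (-(2 * c) * u ^ 2) ≤ C := by
  set n : ℕ := ⌈b / 2⌉₊ with hn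
  refine ⟨max 1 (n.factorial / (2 * c) ^ n), lt_of_lt_of_le one_pos (le_max_left _ _), ?_⟩
  intro u hu
  rcases le_total u 1 with h1 | h1
  · calc u ^ b * Real.exp (-(2 * c) * u ^ 2)
        ≤ 1 * 1 := by
          have hA : u ^ b ≤ 1 := Real.rpow_le_one hu h1 hb
          have hB : Real.exp (-(2 * c) * u ^ 2) ≤ 1 := by
            rw [Real.exp_le_one_iff]; nlinarith
          exact mul_le_mul hA hB (Real.exp_nonneg _) zero_le_one
      _ ≤ _ := by simpa using le_max_left (1:ℝ) _
  · have hu0 : (0:ℝ) < u := lt_of_lt_of_le one_pos h1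
    have hb2 : b ≤ 2 * n := by
      have := Nat.le_ceil (b / 2)
      linarith
    have h2 : u ^ b ≤ (u ^ 2) ^ n := by
      calc u ^ b ≤ u ^ ((2 * n : ℕ) : ℝ) := by
            exact Real.rpow_le_rpow_of_exponent_le h1 (by exact_mod_cast hb2)
        _ = (u ^ 2) ^ n := by
            rw [Real.rpow_natCast, pow_mul]
    have h3 : (2 * c * u ^ 2) ^ n / n.factorial ≤ Real.exp (2 * c * u ^ 2) :=
      pow_div_factorial_le_exp _ (by positivity) n
    have h4 : (u ^ 2) ^ n * Real.exp (-(2 * c) * u ^ 2) ≤ n.factorial / (2 * c) ^ n := by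
      have h5 : (2 * c) ^ n * (u ^ 2) ^ n ≤ n.factorial * Real.exp (2 * c * u ^ 2) := by
        rw [div_le_iff₀ (by positivity)] at h3
        calc (2 * c) ^ n * (u ^ 2) ^ n = (2 * c * u ^ 2) ^ n := by ring
          _ ≤ Real.exp (2 * c * u ^ 2) * n.factorial := h3
          _ = n.factorial * Real.exp (2 * c * u ^ 2) := by ring
      rw [le_div_iff₀ (by positivity), neg_mul, Real.exp_neg]
      calc (u ^ 2) ^ n * (Real.exp (2 * c * u ^ 2))⁻¹ * (2 * c) ^ n
          = ((2 * c) ^ n * (u ^ 2) ^ n) * (Real.exp (2 * c * u ^ 2))⁻¹ := by ring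
        _ ≤ (n.factorial * Real.exp (2 * c * u ^ 2)) * (Real.exp (2 * c * u ^ 2))⁻¹ := by
            gcongr
        _ = (n.factorial : ℝ) := by
            field_simp
    calc u ^ b * Real.exp (-(2 * c) * u ^ 2)
        ≤ (u ^ 2) ^ n * Real.exp (-(2 * c) * u ^ 2) := by
          gcongr
        _ ≤ n.factorial / (2 * c) ^ n := h4
        _ ≤ _ := le_max_right _ _

theorem lemma_c (b c : ℝ) (hb : 0 ≤ b) (hc : 0 < c) :
    ∃ C : ℝ, 0 < C ∧ ∀ x y s ζ : ℝ, 0 < x → 0 < y →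
      s ∈ Set.Icc (-1 : ℝ) 1 → ζ ∈ Set.Ioo (0 : ℝ) 1 →
      x ^ b * Real.exp (-c * (x ^ 2 + y ^ 2 + 2 * x * y * s) / ζ
          - c * ζ * (x ^ 2 + y ^ 2 - 2 * x * y * s))
        ≤ C * ζ ^ (-b / 2) := by
  obtain ⟨C, hC, hCb⟩ := aux_bound b c hb hc
  refine ⟨C, hC, ?_⟩
  rintro x y s ζ hx hy ⟨hs1, hs2⟩ ⟨hz0, hz1⟩
  have hxy : 0 < x * y := mul_pos hx hy
  have hs1' : x * y * (-1) ≤ x * y * s := mul_le_mul_of_nonneg_left hs1 hxy.le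
  have hs2' : x * y * s ≤ x * y * 1 := mul_le_mul_of_nonneg_left hs2 hxy.le
  have hqp : 0 ≤ x ^ 2 + y ^ 2 + 2 * x * y * s := by nlinarith [sq_nonneg (x - y)]
  have hqm : 0 ≤ x ^ 2 + y ^ 2 - 2 * x * y * s := by nlinarith [sq_nonneg (x - y)]
  -- exponent bound
  have hzinv : ζ ≤ 1 / ζ := by
    rw [le_div_iff₀ hz0]; nlinarith
  have hexp : -c * (x ^ 2 + y ^ 2 + 2 * x * y * s) / ζ
          - c * ζ * (x ^ 2 + y ^ 2 - 2 * x * y * s) ≤ -(2 * c) * (ζ * x ^ 2) := by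
    have h1 : c * ζ * (x ^ 2 + y ^ 2 + 2 * x * y * s)
        ≤ c * (x ^ 2 + y ^ 2 + 2 * x * y * s) / ζ := by
      rw [div_eq_mul_one_div]
      calc c * ζ * (x ^ 2 + y ^ 2 + 2 * x * y * s)
          = c * (x ^ 2 + y ^ 2 + 2 * x * y * s) * ζ := by ring
        _ ≤ c * (x ^ 2 + y ^ 2 + 2 * x * y * s) * (1/ζ) := by
            apply mul_le_mul_of_nonneg_left hzinv (by positivity)
    have hrw : -c * (x ^ 2 + y ^ 2 + 2 * x * y * s) / ζ
        = -(c * (x ^ 2 + y ^ 2 + 2 * x * y * s) / ζ) := by ring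
    rw [hrw]
    nlinarith [mul_nonneg (mul_nonneg hc.le hz0.le) (sq_nonneg y), h1]
  have key : x ^ b * Real.exp (-c * (x ^ 2 + y ^ 2 + 2 * x * y * s) / ζ
          - c * ζ * (x ^ 2 + y ^ 2 - 2 * x * y * s))
      ≤ x ^ b * Real.exp (-(2 * c) * (ζ * x ^ 2)) := by
    apply mul_le_mul_of_nonneg_left (Real.exp_le_exp.2 hexp) (Real.rpow_nonneg hx.le b)
  refine key.trans ?_
  -- substitute u = x * sqrt ζ
  set u := x * Real.sqrt ζ with hu
  have hsq : Real.sqrt ζ > 0 := Real.sqrt_pos.2 hz0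
  have hu0 : 0 < u := mul_pos hx hsq
  have husq : u ^ 2 = ζ * x ^ 2 := by
    rw [hu, mul_pow, Real.sq_sqrt hz0.le]; ring
  have hxub : x ^ b = u ^ b * ζ ^ (-b / 2) := by
    rw [hu, Real.mul_rpow hx.le hsq.le]
    have : Real.sqrt ζ ^ b * ζ ^ (-b / 2) = 1 := by
      rw [Real.sqrt_eq_rpow, ← Real.rpow_mul hz0.le, ← Real.rpow_add hz0,
        show 1 / 2 * b + -b / 2 = 0 by ring, Real.rpow_zero]
    rw [mul_assoc, this, mul_one]
  calc x ^ b * Real.exp (-(2 * c) * (ζ * x ^ 2))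
      = (u ^ b * Real.exp (-(2 * c) * u ^ 2)) * ζ ^ (-b / 2) := by
        rw [hxub, husq]; ring
    _ ≤ C * ζ ^ (-b / 2) := by
        apply mul_le_mul_of_nonneg_right (hCb u hu0.le) (Real.rpow_nonneg hz0.le _)
end
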